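/- Let K: ℝ → ℝ be integrable, supported in [−1,1], with ∫_ℝ K(y) dy = 1, and for an integer n ≥ 1 set K_n(y) = n·K(n·y) and K_n p(x) = ∫_ℝ K_n(y)·p(x − y) dy. Let A > 0, 0 < β ≤ 1, L > 0, M > 0, and let p: ℝ → ℝ vanish outside [0,A], satisfy |p(x)| ≤ M for all x, and satisfy |p(x) − p(y)| ≤ L|x − y|^β for all x, y ∈ [0,A]. Then for every integer n ≥ 1, ∫_ℝ |p(x) − K_n p(x)| dx ≤ A·L·‖K‖_{L¹(ℝ)}·n^{−β} + 4M(1 + ‖K‖_{L¹(ℝ)})·n^{−1}. -/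

import Mathlib

open MeasureTheory

/-- `L¹` mollification rate for the zero extension of a Hölder
function: with `K` integrable, supported in `[−1,1]`, of total mass `1`, and `p`
bounded by `M`, vanishing outside `[0,A]`, and `(L,β)`-Hölder on `[0,A]`, one has
`∫ |p − K_n p| ≤ A·L·‖K‖₁·n^{−β} + 4M(1 + ‖K‖₁)·n^{−1}`. -/
theorem stmt5 (K : ℝ → ℝ) (hK : Integrable K)
    (hKsupp : ∀ y, y ∉ Set.Icc (-1:ℝ) 1 → K y = 0)
    (hK1 : (∫ y, K y) = 1)
    (A : ℝ) (hA : 0 < A) (β : ℝ) (hβ0 : 0 < β) (hβ1 : β ≤ 1)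
    (L M : ℝ) (hL : 0 < L) (hM : 0 < M)
    (p : ℝ → ℝ) (hpsupp : ∀ x, x ∉ Set.Icc (0:ℝ) A → p x = 0)
    (hpM : ∀ x, |p x| ≤ M)
    (hpHolder : ∀ x ∈ Set.Icc (0:ℝ) A, ∀ y ∈ Set.Icc (0:ℝ) A,
      |p x - p y| ≤ L * |x - y| ^ β)
    (n : ℕ) (hn : 1 ≤ n) :
    ∫ x, |p x - ∫ y, (n : ℝ) * K (n * y) * p (x - y)|
      ≤ A * L * (∫ y, |K y|) * (n : ℝ) ^ (-β)
        + 4 * M * (1 + ∫ y, |K y|) * (n : ℝ)⁻¹ := by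
  classical
  have hn0 : (0:ℝ) < n := by exact_mod_cast hn
  set ni : ℝ := (n:ℝ)⁻¹ with hni_def
  have hni0 : 0 < ni := inv_pos.2 hn0
  set nb : ℝ := (n:ℝ) ^ (-β) with hnb_def
  have hnb0 : 0 ≤ nb := Real.rpow_nonneg hn0.le _
  set Kn : ℝ → ℝ := fun y => (n:ℝ) * K ((n:ℝ) * y) with hKn_def
  -- continuity of p on [0, A]
  have hpcont : ContinuousOn p (Set.Icc 0 A) := by
    intro x hx
    rw [Metric.continuousWithinAt_iff]
    intro ε hε
    refine ⟨(ε / (2 * L)) ^ β⁻¹, Real.rpow_pos_of_pos (by positivity) _, ?_⟩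
    intro y hy hdist
    have hbase : (0:ℝ) < ε / (2 * L) := by positivity
    have h1 : |y - x| ≤ (ε / (2 * L)) ^ β⁻¹ := by
      rw [Real.dist_eq] at hdist; linarith
    have h2 : |y - x| ^ β ≤ ((ε / (2 * L)) ^ β⁻¹) ^ β :=
      Real.rpow_le_rpow (abs_nonneg _) h1 hβ0.le
    have h3 : ((ε / (2 * L)) ^ β⁻¹ : ℝ) ^ β = ε / (2 * L) := by
      rw [← Real.rpow_mul hbase.le, inv_mul_cancel₀ hβ0.ne', Real.rpow_one]
    have h4 : |p y - p x| ≤ L * |y - x| ^ β := hpHolder y hy x hx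
    rw [Real.dist_eq]
    have : L * |y - x| ^ β ≤ L * (ε / (2 * L)) := by
      rw [← h3]; exact mul_le_mul_of_nonneg_left h2 hL.le
    have hE : L * (ε / (2 * L)) = ε / 2 := by field_simp
    calc |p y - p x| ≤ L * |y - x| ^ β := h4
      _ ≤ ε / 2 := by rw [← hE]; exact this
      _ < ε := by linarith
  have hpmeas : Measurable p := by
    have hrw : p = Set.piecewise (Set.Icc 0 A) p (fun _ => 0) := by
      funext x
      by_cases h : x ∈ Set.Icc (0:ℝ) A
      · simp [Set.piecewise, h]
      · simp [Set.piecewise, h, hpsupp x h]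
    rw [hrw]
    exact hpcont.measurable_piecewise continuousOn_const measurableSet_Icc
  -- integrability of Kn and its integrals
  have hKn_int : Integrable Kn :=
    (hK.comp_mul_left' (ne_of_gt hn0)).const_mul _
  have hKn1 : (∫ y, Kn y) = 1 := by
    have := Measure.integral_comp_mul_left K (n:ℝ)
    simp only [hKn_def]
    rw [MeasureTheory.integral_const_mul, this, hK1, smul_eq_mul,
      abs_of_pos (inv_pos.2 hn0)]
    field_simp
  have hKnabs : (∫ y, |Kn y|) = ∫ y, |K y| := by
    have h1 : ∀ y, |Kn y| = (n:ℝ) * |K ((n:ℝ) * y)| := by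
      intro y
      simp only [hKn_def, abs_mul, abs_of_pos hn0]
    simp only [h1]
    rw [MeasureTheory.integral_const_mul,
      Measure.integral_comp_mul_left (fun t => |K t|) (n:ℝ), smul_eq_mul,
      abs_of_pos (inv_pos.2 hn0)]
    field_simp
  set IK : ℝ := ∫ y, |K y| with hIK_def
  have hIK0 : 0 ≤ IK := integral_nonneg fun y => abs_nonneg _
  -- support of Kn
  have hKn_supp : ∀ y, Kn y ≠ 0 → |y| ≤ ni := by
    intro y hy
    have hKny : K ((n:ℝ) * y) ≠ 0 := by
      intro h; exact hy (by simp [hKn_def, h])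
    have hmem : (n:ℝ) * y ∈ Set.Icc (-1:ℝ) 1 := by
      by_contra h; exact hKny (hKsupp _ h)
    obtain ⟨h1, h2⟩ := hmem
    have hinv : (n:ℝ) * (n:ℝ)⁻¹ = 1 := mul_inv_cancel₀ hn0.ne'
    rw [abs_le]
    constructor
    · show -ni ≤ y
      rw [hni_def]
      nlinarith
    · show y ≤ ni
      rw [hni_def]
      nlinarith
  -- the comparison function c
  set c : ℝ → ℝ := fun x =>
    Set.indicator (Set.Icc 0 A) (fun _ => L * nb) x
      + Set.indicator (Set.Icc (-ni) ni) (fun _ => M) x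
      + Set.indicator (Set.Icc (A - ni) (A + ni)) (fun _ => M) x with hc_def
  have ind_nonneg : ∀ (s : Set ℝ) (r : ℝ), 0 ≤ r → ∀ x,
      0 ≤ Set.indicator s (fun _ => r) x := by
    intro s r hr x
    exact Set.indicator_nonneg (fun _ _ => hr) x
  have hLnb0 : 0 ≤ L * nb := by positivity
  have hc0 : ∀ x, 0 ≤ c x := by
    intro x
    have := ind_nonneg (Set.Icc 0 A) (L * nb) hLnb0 x
    have := ind_nonneg (Set.Icc (-ni) ni) M hM.le x
    have := ind_nonneg (Set.Icc (A - ni) (A + ni)) M hM.le x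
    simp only [hc_def]; linarith
  have hc1 : ∀ x, x ∈ Set.Icc (0:ℝ) A → L * nb ≤ c x := by
    intro x hx
    have h1 : Set.indicator (Set.Icc 0 A) (fun _ => L * nb) x = L * nb :=
      Set.indicator_of_mem hx _
    have := ind_nonneg (Set.Icc (-ni) ni) M hM.le x
    have := ind_nonneg (Set.Icc (A - ni) (A + ni)) M hM.le x
    simp only [hc_def]; rw [h1]; linarith
  have hc2 : ∀ x, x ∈ Set.Icc (-ni) ni → M ≤ c x := by
    intro x hx
    have h1 : Set.indicator (Set.Icc (-ni) ni) (fun _ => M) x = M :=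
      Set.indicator_of_mem hx _
    have := ind_nonneg (Set.Icc 0 A) (L * nb) hLnb0 x
    have := ind_nonneg (Set.Icc (A - ni) (A + ni)) M hM.le x
    simp only [hc_def]; rw [h1]; linarith
  have hc3 : ∀ x, x ∈ Set.Icc (A - ni) (A + ni) → M ≤ c x := by
    intro x hx
    have h1 : Set.indicator (Set.Icc (A - ni) (A + ni)) (fun _ => M) x = M :=
      Set.indicator_of_mem hx _
    have := ind_nonneg (Set.Icc 0 A) (L * nb) hLnb0 x
    have := ind_nonneg (Set.Icc (-ni) ni) M hM.le x
    simp only [hc_def]; rw [h1]; linarith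
  -- integrability and integral of c
  have hind_int : ∀ (a b r : ℝ),
      Integrable (Set.indicator (Set.Icc a b) (fun _ => r)) := by
    intro a b r
    refine (integrableOn_const ?_).integrable_indicator measurableSet_Icc
    exact measure_Icc_lt_top.ne
  have hcint : Integrable c := by
    simp only [hc_def]
    exact ((hind_int 0 A (L * nb)).add (hind_int (-ni) ni M)).add
      (hind_int (A - ni) (A + ni) M)
  have hind_val : ∀ (a b r : ℝ), a ≤ b →
      (∫ x, Set.indicator (Set.Icc a b) (fun _ => r) x) = (b - a) * r := by
    intro a b r hab
    rw [MeasureTheory.integral_indicator_const r measurableSet_Icc,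
      Real.volume_real_Icc_of_le hab, smul_eq_mul]
  have hcval : (∫ x, c x) = A * (L * nb) + (2 * ni) * M + (2 * ni) * M := by
    have e1 : (∫ x, c x)
        = (∫ x, (Set.Icc 0 A).indicator (fun _ => L * nb) x
            + (Set.Icc (-ni) ni).indicator (fun _ => M) x)
          + ∫ x, (Set.Icc (A - ni) (A + ni)).indicator (fun _ => M) x :=
      integral_add ((hind_int 0 A (L * nb)).add (hind_int (-ni) ni M))
        (hind_int (A - ni) (A + ni) M)
    have e2 : (∫ x, (Set.Icc 0 A).indicator (fun _ => L * nb) x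
            + (Set.Icc (-ni) ni).indicator (fun _ => M) x)
        = (∫ x, (Set.Icc 0 A).indicator (fun _ => L * nb) x)
          + ∫ x, (Set.Icc (-ni) ni).indicator (fun _ => M) x :=
      integral_add (hind_int 0 A (L * nb)) (hind_int (-ni) ni M)
    rw [e1, e2, hind_val 0 A (L * nb) hA.le, hind_val (-ni) ni M (by linarith),
      hind_val (A - ni) (A + ni) M (by linarith)]
    ring_nf
  -- rpow facts
  have hrpow : ni ^ β = nb := by
    rw [hnb_def, hni_def, Real.rpow_neg hn0.le, ← Real.inv_rpow hn0.le]
  -- key pointwise bound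
  have key : ∀ x y, |Kn y| * |p x - p (x - y)| ≤ |Kn y| * c x := by
    intro x y
    rcases eq_or_ne (Kn y) 0 with h0 | h0
    · simp [h0]
    have hyabs : |y| ≤ ni := hKn_supp y h0
    have hy1 : -ni ≤ y := neg_le_of_abs_le hyabs
    have hy2 : y ≤ ni := le_of_abs_le hyabs
    refine mul_le_mul_of_nonneg_left ?_ (abs_nonneg _)
    by_cases h1 : x ∈ Set.Icc (0:ℝ) A <;> by_cases h2 : x - y ∈ Set.Icc (0:ℝ) A
    · -- both in [0, A]: Hölder
      have hH := hpHolder x h1 (x - y) h2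
      have hxx : x - (x - y) = y := by ring
      rw [hxx] at hH
      have h5 : |y| ^ β ≤ ni ^ β := Real.rpow_le_rpow (abs_nonneg _) hyabs hβ0.le
      calc |p x - p (x - y)| ≤ L * |y| ^ β := hH
        _ ≤ L * nb := by rw [← hrpow]; exact mul_le_mul_of_nonneg_left h5 hL.le
        _ ≤ c x := hc1 x h1
    · -- x in, x - y out: boundary strip
      have hp2 : p (x - y) = 0 := hpsupp _ h2
      have hb : |p x - p (x - y)| ≤ M := by rw [hp2, sub_zero]; exact hpM x
      obtain ⟨hx0, hxA⟩ := h1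
      rw [Set.mem_Icc, not_and_or, not_le, not_le] at h2
      rcases h2 with h2 | h2
      · -- x - y < 0, so x < y ≤ ni
        have : x ∈ Set.Icc (-ni) ni := ⟨by linarith, by linarith⟩
        exact hb.trans (hc2 x this)
      · -- x - y > A, so x > A + y ≥ A - ni
        have : x ∈ Set.Icc (A - ni) (A + ni) := ⟨by linarith, by linarith⟩
        exact hb.trans (hc3 x this)
    · -- x out, x - y in
      have hp1 : p x = 0 := hpsupp _ h1
      have hb : |p x - p (x - y)| ≤ M := by
        rw [hp1, zero_sub, abs_neg]; exact hpM _
      obtain ⟨hx0, hxA⟩ := h2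
      rw [Set.mem_Icc, not_and_or, not_le, not_le] at h1
      rcases h1 with h1 | h1
      · have : x ∈ Set.Icc (-ni) ni := ⟨by linarith, by linarith⟩
        exact hb.trans (hc2 x this)
      · have : x ∈ Set.Icc (A - ni) (A + ni) := ⟨by linarith, by linarith⟩
        exact hb.trans (hc3 x this)
    · -- both out
      rw [hpsupp _ h1, hpsupp _ h2, sub_zero, abs_zero]
      exact hc0 x
  -- integrability of the convolution integrand and identity
  have hconv_int : ∀ x, Integrable (fun y => Kn y * p (x - y)) := by
    intro x
    have hm : AEStronglyMeasurable (fun y => p (x - y)) volume :=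
      (hpmeas.comp (measurable_const.sub measurable_id)).aestronglyMeasurable
    have := hKn_int.bdd_mul hm (Filter.Eventually.of_forall fun y => by
      rw [Real.norm_eq_abs]; exact hpM _)
    simpa [mul_comm] using this
  have hEq : ∀ x, p x - (∫ y, Kn y * p (x - y))
      = ∫ y, Kn y * (p x - p (x - y)) := by
    intro x
    have h1 : Integrable (fun y => Kn y * p x) := hKn_int.mul_const _
    have h2 : (∫ y, Kn y * (p x - p (x - y)))
        = (∫ y, Kn y * p x) - ∫ y, Kn y * p (x - y) := by
      rw [← integral_sub h1 (hconv_int x)]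
      congr 1; funext y; ring
    rw [h2, MeasureTheory.integral_mul_const, hKn1, one_mul]
  -- pointwise bound on the error
  have hx_bound : ∀ x, |p x - ∫ y, Kn y * p (x - y)| ≤ IK * c x := by
    intro x
    rw [hEq x]
    have habs : |∫ y, Kn y * (p x - p (x - y))|
        ≤ ∫ y, |Kn y| * |p x - p (x - y)| := by
      simpa [Real.norm_eq_abs, abs_mul] using
        norm_integral_le_integral_norm (μ := volume) (fun y => Kn y * (p x - p (x - y)))
    have hmono : (∫ y, |Kn y| * |p x - p (x - y)|)
        ≤ ∫ y, |Kn y| * c x := by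
      refine integral_mono_of_nonneg
        (Filter.Eventually.of_forall fun y =>
          mul_nonneg (abs_nonneg _) (abs_nonneg _))
        ((hKn_int.abs.mul_const _)) (Filter.Eventually.of_forall fun y => key x y)
    calc |∫ y, Kn y * (p x - p (x - y))| ≤ ∫ y, |Kn y| * c x := habs.trans hmono
      _ = IK * c x := by rw [MeasureTheory.integral_mul_const, hKnabs]
  -- conclude
  have hfinal : (∫ x, |p x - ∫ y, Kn y * p (x - y)|) ≤ IK * ∫ x, c x := by
    calc (∫ x, |p x - ∫ y, Kn y * p (x - y)|)
        ≤ ∫ x, IK * c x :=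
          integral_mono_of_nonneg (Filter.Eventually.of_forall fun x => abs_nonneg _)
            (hcint.const_mul IK) (Filter.Eventually.of_forall hx_bound)
      _ = IK * ∫ x, c x := MeasureTheory.integral_const_mul IK c
  rw [hcval] at hfinal
  have hgoal_eq : (∫ x, |p x - ∫ y, (n : ℝ) * K (n * y) * p (x - y)|)
      = ∫ x, |p x - ∫ y, Kn y * p (x - y)| := rfl
  rw [hgoal_eq]
  refine hfinal.trans ?_
  have h4 : IK * ((2 * ni) * M + (2 * ni) * M) ≤ 4 * M * (1 + IK) * ni := by
    nlinarith [mul_nonneg hM.le hni0.le]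
  nlinarith [mul_nonneg hM.le hni0.le, mul_nonneg (mul_nonneg hA.le hL.le) hnb0]
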